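/- The set of natural numbers n such that the Catalan number Cₙ is NOT divisible by 3 has asymptotic density 0; that is, the limit as N → ∞ of (1/N)·#{n < N : Cₙ ≢ 0 mod 3} equals 0. -/

import Mathlib

open Filter Finset Nat


lemma dig_lb {n i : ℕ} (h : n / 3 ^ i % 3 = 2) : 2 * 3 ^ i ≤ n := by
  have h2 := Nat.mod_le (n / 3 ^ i) 3
  have h1 : 2 ≤ n / 3 ^ i := by omega
  calc 2 * 3 ^ i ≤ (n / 3 ^ i) * 3 ^ i := Nat.mul_le_mul_right _ h1
    _ ≤ n := Nat.div_mul_le_self n _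

-- from 3^t ∣ n+1, all digits below t are 2
lemma dig_two_of_dvd {n t : ℕ} (h : 3 ^ t ∣ n + 1) {j : ℕ} (hj : j < t) :
    n / 3 ^ j % 3 = 2 := by
  obtain ⟨m, hm⟩ := h
  have htpos : 1 ≤ 3 ^ t := Nat.one_le_pow _ _ (by norm_num)
  have hm1 : 1 ≤ m := by nlinarith
  have hpow : 3 ^ t = 3 ^ j * 3 ^ (t - j) := by
    rw [← pow_add]; congr 1; omega
  have htj : 1 ≤ 3 ^ (t - j) := Nat.one_le_pow _ _ (by norm_num)
  have hj1 : 1 ≤ 3 ^ j := Nat.one_le_pow _ _ (by norm_num)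
  have hK : 1 ≤ 3 ^ (t - j) * m := Nat.one_le_iff_ne_zero.2 (by positivity)
  set M : ℕ := 3 ^ (t - j) * m - 1 with hM
  have e : n + 1 = 3 ^ j * (3 ^ (t - j) * m) := by rw [hm, hpow]; ring
  have e1 : 3 ^ (t - j) * m = M + 1 := by omega
  have e2 : n + 1 = 3 ^ j * M + 3 ^ j := by rw [e, e1, Nat.mul_add, Nat.mul_one]
  have hn : n = 3 ^ j * M + (3 ^ j - 1) := by omega
  have hdiv : n / 3 ^ j = M := by
    rw [hn, Nat.mul_add_div (by positivity), Nat.div_eq_of_lt (by omega)]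
    omega
  rw [hdiv]
  have h3 : 3 ∣ M + 1 := by
    rw [← e1]
    exact Dvd.dvd.mul_right (dvd_pow_self 3 (by omega)) m
  omega

-- digit i of n equal to 2 gives a carry at position i+1 when adding n + n in base 3
lemma carry_of_dig {n i : ℕ} (h : n / 3 ^ i % 3 = 2) :
    3 ^ (i + 1) ≤ n % 3 ^ (i + 1) + n % 3 ^ (i + 1) := by
  have key : n / 3 ^ i % 3 = n % 3 ^ (i + 1) / 3 ^ i := by
    rw [← Nat.mod_mul_right_div_self, pow_succ]
  have h2 : 2 ≤ n % 3 ^ (i + 1) / 3 ^ i := by omega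
  have : 2 * 3 ^ i ≤ n % 3 ^ (i + 1) := by
    calc 2 * 3 ^ i ≤ (n % 3 ^ (i + 1) / 3 ^ i) * 3 ^ i := Nat.mul_le_mul_right _ h2
      _ ≤ _ := Nat.div_mul_le_self _ _
  have : 3 ^ (i + 1) = 3 * 3 ^ i := by rw [pow_succ]; ring
  omega


/-- If `3 ∤ Cₙ`, then the base-3 digits of `n` equal to `2` form an initial segment. -/
lemma key {n : ℕ} (h : ¬ 3 ∣ catalan n) :
    ∃ t, 3 ^ t ∣ n + 1 ∧ ∀ i, n / 3 ^ i % 3 = 2 ↔ i < t := by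
  have hp : Nat.Prime 3 := by norm_num
  set b : ℕ := Nat.log 3 (n + n) + 1 with hb
  have hnb : Nat.log 3 (n + n) < b := Nat.lt_succ_self _
  set T : Finset ℕ := {i ∈ Ico 1 b | 3 ^ i ≤ n % 3 ^ i + n % 3 ^ i} with hT
  have hkum : emultiplicity 3 (Nat.centralBinom n) = (T.card : ℕ∞) := by
    rw [Nat.centralBinom, two_mul]
    exact hp.emultiplicity_choose' hnb
  have hmul : emultiplicity 3 (Nat.centralBinom n) = emultiplicity 3 (n + 1) := by
    rw [← succ_mul_catalan_eq_centralBinom, emultiplicity_mul hp.prime,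
      emultiplicity_eq_zero.2 h, add_zero]
  set t : ℕ := T.card with ht
  have hdvd : 3 ^ t ∣ n + 1 :=
    pow_dvd_of_le_emultiplicity (le_of_eq (by rw [← hmul, hkum]))
  have hndvd : ¬ 3 ^ (t + 1) ∣ n + 1 := by
    intro hd
    have := le_emultiplicity_of_pow_dvd hd
    rw [← hmul, hkum] at this
    exact absurd (by exact_mod_cast this) (by omega)
  refine ⟨t, hdvd, fun i => ⟨fun hi => ?_, fun hi => dig_two_of_dvd hdvd hi⟩⟩
  -- forward: digit i = 2 → i < t
  by_contra hit
  push_neg at hit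
  -- the set of digit-2 positions: includes range t ∪ {i}, injects (+1) into T
  set tw : Finset ℕ := insert i (range t) with htw
  have htwcard : tw.card = t + 1 := by
    rw [Finset.card_insert_of_notMem (by simp; omega), Finset.card_range]
  have hmaps : ∀ j ∈ tw, j + 1 ∈ T := by
    intro j hj
    have hdig : n / 3 ^ j % 3 = 2 := by
      rcases Finset.mem_insert.1 hj with rfl | hj
      · exact hi
      · exact dig_two_of_dvd hdvd (Finset.mem_range.1 hj)
    have hlb := dig_lb hdig
    have h3j : (3:ℕ) ^ (j + 1) ≤ n + n := by
      have : (3:ℕ) ^ (j+1) = 3 * 3 ^ j := by rw [pow_succ]; ring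
      omega
    have hjb : j + 1 < b := by
      have hnn : n + n ≠ 0 := by
        have : 1 ≤ 3 ^ j := Nat.one_le_pow _ _ (by norm_num)
        omega
      have := (Nat.le_log_iff_pow_le (by norm_num) hnn).2 h3j
      omega
    simp only [hT, Finset.mem_filter, Finset.mem_Ico]
    exact ⟨⟨by omega, hjb⟩, carry_of_dig hdig⟩
  have : tw.card ≤ T.card :=
    Finset.card_le_card_of_injOn (· + 1) hmaps (fun x _ y _ hxy => by simpa using hxy)
  omega


/-- Numbers below `3^k` with all base-3 digits ≤ 1. -/
def F (k : ℕ) : Finset ℕ := {q ∈ range (3 ^ k) | ∀ i ∈ range k, q / 3 ^ i % 3 ≤ 1}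

lemma F_card (k : ℕ) : (F k).card ≤ 2 ^ k := by
  induction k with
  | zero =>
    have : F 0 ⊆ range 1 := filter_subset _ _
    simpa using Finset.card_le_card this
  | succ k ih =>
    have himg : (F (k + 1)).image (· / 3) ⊆ F k := by
      intro a ha
      obtain ⟨q, hq, rfl⟩ := Finset.mem_image.1 ha
      obtain ⟨hqr, hqd⟩ := Finset.mem_filter.1 hq
      refine Finset.mem_filter.2 ⟨Finset.mem_range.2 ?_, fun i hi => ?_⟩
      · have : q < 3 ^ (k + 1) := Finset.mem_range.1 hqr
        rw [Nat.div_lt_iff_lt_mul (by norm_num)]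
        calc q < 3 ^ (k+1) := this
          _ = 3 ^ k * 3 := by rw [pow_succ]
      · have : q / 3 / 3 ^ i = q / 3 ^ (i + 1) := by
          rw [Nat.div_div_eq_div_mul, ← pow_succ']
        rw [this]
        exact hqd (i + 1) (Finset.mem_range.2 (by simpa using Finset.mem_range.1 hi))
    have hfib : ∀ a ∈ (F (k + 1)).image (· / 3),
        ({q ∈ F (k + 1) | q / 3 = a}).card ≤ 2 := by
      intro a _
      have hsub : {q ∈ F (k + 1) | q / 3 = a} ⊆ {3 * a, 3 * a + 1} := by
        intro q hq
        obtain ⟨hqF, hqa⟩ := Finset.mem_filter.1 hq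
        obtain ⟨_, hqd⟩ := Finset.mem_filter.1 hqF
        have h0 : q % 3 ≤ 1 := by
          have := hqd 0 (Finset.mem_range.2 (by omega))
          simpa using this
        have := Nat.div_add_mod q 3
        simp only [Finset.mem_insert, Finset.mem_singleton]
        omega
      calc ({q ∈ F (k + 1) | q / 3 = a}).card ≤ ({3 * a, 3 * a + 1} : Finset ℕ).card :=
            Finset.card_le_card hsub
        _ ≤ 2 := Finset.card_insert_le _ _ |>.trans (by simp)
    calc (F (k + 1)).card ≤ 2 * ((F (k + 1)).image (· / 3)).card :=
          Finset.card_le_mul_card_image _ 2 hfib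
      _ ≤ 2 * (F k).card := by
          exact Nat.mul_le_mul_left _ (Finset.card_le_card himg)
      _ ≤ 2 * 2 ^ k := Nat.mul_le_mul_left _ ih
      _ = 2 ^ (k + 1) := by rw [pow_succ]; ring

lemma S_count (k : ℕ) :
    ({n ∈ range (3 ^ k) | ¬ 3 ∣ catalan n}).card ≤ (k + 1) * 2 ^ k := by
  have hsub : {n ∈ range (3 ^ k) | ¬ 3 ∣ catalan n} ⊆
      (range (k + 1) ×ˢ F k).image (fun p : ℕ × ℕ => p.2 * 3 ^ p.1 + (3 ^ p.1 - 1)) := by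
    intro n hn
    obtain ⟨hnr, hnc⟩ := Finset.mem_filter.1 hn
    have hnk : n < 3 ^ k := Finset.mem_range.1 hnr
    obtain ⟨t, hdvd, hiff⟩ := key hnc
    have htk : t ≤ k := by
      rcases Nat.eq_zero_or_pos t with rfl | ht
      · omega
      · have hd : n / 3 ^ (t - 1) % 3 = 2 := (hiff (t - 1)).2 (by omega)
        have := dig_lb hd
        have h2 : 3 ^ (t - 1) < 3 ^ k := by omega
        have := (Nat.pow_lt_pow_iff_right (by norm_num : 1 < 3)).1 h2
        omega
      -- n % 3^t = 3^t - 1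
    obtain ⟨m, hm⟩ := hdvd
    have htpos : 1 ≤ (3:ℕ) ^ t := Nat.one_le_pow _ _ (by norm_num)
    have hmod : n % 3 ^ t = 3 ^ t - 1 := by
      have hq := Nat.div_add_mod n (3 ^ t)
      set r := n % 3 ^ t with hr
      have hrlt : r < 3 ^ t := Nat.mod_lt _ (by positivity)
      have h0 : (n + 1) % 3 ^ t = 0 := by rw [hm]; exact Nat.mul_mod_right _ _
      have e1 : n + 1 = 3 ^ t * (n / 3 ^ t) + (r + 1) := by omega
      have h2 : (r + 1) % 3 ^ t = 0 := by rw [e1, Nat.mul_add_mod] at h0; exact h0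
      rcases Nat.lt_or_ge (r + 1) (3 ^ t) with hlt | hge
      · rw [Nat.mod_eq_of_lt hlt] at h2; omega
      · omega
    refine Finset.mem_image.2 ⟨(t, n / 3 ^ t), Finset.mem_product.2 ⟨Finset.mem_range.2 (by omega), ?_⟩, ?_⟩
    · refine Finset.mem_filter.2 ⟨Finset.mem_range.2 ?_, fun i _ => ?_⟩
      · exact lt_of_le_of_lt (Nat.div_le_self _ _) hnk
      · have e : n / 3 ^ t / 3 ^ i = n / 3 ^ (t + i) := by
          rw [Nat.div_div_eq_div_mul, ← pow_add]
        rw [e]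
        have hne : n / 3 ^ (t + i) % 3 ≠ 2 := by
          intro hc
          have := (hiff (t + i)).1 hc
          omega
        have := Nat.mod_lt (n / 3 ^ (t + i)) (show 0 < 3 by norm_num)
        omega
    · have h1 := Nat.div_add_mod n (3 ^ t)
      have h2 : n / 3 ^ t * 3 ^ t = 3 ^ t * (n / 3 ^ t) := Nat.mul_comm _ _
      simp only
      omega
  calc ({n ∈ range (3 ^ k) | ¬ 3 ∣ catalan n}).card
      ≤ ((range (k + 1) ×ˢ F k).image _).card := Finset.card_le_card hsub
    _ ≤ (range (k + 1) ×ˢ F k).card := Finset.card_image_le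
    _ = (k + 1) * (F k).card := by rw [Finset.card_product, Finset.card_range]
    _ ≤ (k + 1) * 2 ^ k := Nat.mul_le_mul_left _ (F_card k)


/-- The set of `n` with `Cₙ ≢ 0 (mod 3)` has asymptotic density 0. -/
theorem catalan_not_modEq_zero_three_density_zero :
    Tendsto (fun N : ℕ => ({n : ℕ | n < N ∧ ¬ catalan n ≡ 0 [MOD 3]}.ncard : ℝ) / N)
      atTop (nhds 0) := by
  -- rewrite the set as a finset
  have hset : ∀ N : ℕ, ({n : ℕ | n < N ∧ ¬ catalan n ≡ 0 [MOD 3]}.ncard : ℝ)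
      = (({n ∈ range N | ¬ 3 ∣ catalan n}).card : ℝ) := by
    intro N
    congr 1
    have : {n : ℕ | n < N ∧ ¬ catalan n ≡ 0 [MOD 3]}
        = ↑({n ∈ range N | ¬ 3 ∣ catalan n}) := by
      ext n
      simp [Nat.modEq_zero_iff_dvd]
    rw [this, Set.ncard_coe_finset]
  -- bound function
  set g : ℕ → ℝ := fun N => 3 * ((Nat.clog 3 N : ℝ) + 1) * (2 / 3) ^ (Nat.clog 3 N) with hg
  have hgtend : Tendsto g atTop (nhds 0) := by
    have A : Tendsto (fun n : ℕ => (n : ℝ) * (2 / 3) ^ n) atTop (nhds 0) := by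
      simpa using tendsto_pow_const_mul_const_pow_of_abs_lt_one 1
        (show |(2 / 3 : ℝ)| < 1 by rw [abs_of_pos (by norm_num)]; norm_num)
    have B : Tendsto (fun n : ℕ => ((2 : ℝ) / 3) ^ n) atTop (nhds 0) :=
      tendsto_pow_atTop_nhds_zero_of_lt_one (by norm_num) (by norm_num)
    have hf : Tendsto (fun k : ℕ => 3 * ((k : ℝ) + 1) * (2 / 3) ^ k) atTop (nhds 0) := by
      have := ((A.add B).const_mul (3 : ℝ))
      simp only [mul_zero, add_zero, zero_add] at this
      refine this.congr fun k => by ring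
    have hclog : Tendsto (fun N : ℕ => Nat.clog 3 N) atTop atTop := by
      refine tendsto_atTop_atTop.2 fun m => ⟨3 ^ m, fun N hN => ?_⟩
      calc m = Nat.clog 3 (3 ^ m) := (Nat.clog_pow 3 m (by norm_num)).symm
        _ ≤ Nat.clog 3 N := Nat.clog_mono_right _ hN
    exact hf.comp hclog
  -- squeeze
  refine tendsto_of_tendsto_of_tendsto_of_le_of_le' tendsto_const_nhds hgtend ?_ ?_
  · filter_upwards with N
    positivity
  · filter_upwards [eventually_ge_atTop 1] with N hN
    rw [hset]
    set k := Nat.clog 3 N with hk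
    have hcount : ({n ∈ range N | ¬ 3 ∣ catalan n}).card ≤ (k + 1) * 2 ^ k := by
      calc ({n ∈ range N | ¬ 3 ∣ catalan n}).card
          ≤ ({n ∈ range (3 ^ k) | ¬ 3 ∣ catalan n}).card := by
            apply Finset.card_le_card
            apply Finset.filter_subset_filter
            exact Finset.range_subset_range.2 (Nat.le_pow_clog (by norm_num) N)
        _ ≤ (k + 1) * 2 ^ k := S_count k
    have hpow : (3 : ℕ) ^ k ≤ 3 * N := by
      rcases Nat.lt_or_ge N 2 with h2 | h2
      · interval_cases N
        · simp [hk]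
      · have hk1 : 1 ≤ k := Nat.clog_pos (by norm_num) h2
        have hlt : 3 ^ (k - 1) < N := by
          simpa [hk, Nat.pred_eq_sub_one] using
            Nat.pow_pred_clog_lt_self (show 1 < 3 by norm_num) (show 1 < N by omega)
        have e : (3:ℕ) ^ k = 3 * 3 ^ (k - 1) := by
          rw [← _root_.pow_succ']
          congr 1
          omega
        rw [e]
        omega
    have hN0 : (0 : ℝ) < N := by exact_mod_cast hN
    have hgN : g N = 3 * ((k : ℝ) + 1) * (2 / 3) ^ k := rfl
    rw [hgN, div_le_iff₀ hN0]
    have h1 : (({n ∈ range N | ¬ 3 ∣ catalan n}).card : ℝ) ≤ ((k : ℝ) + 1) * 2 ^ k := by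
      exact_mod_cast hcount
    have h2 : (3 : ℝ) ^ k ≤ 3 * N := by exact_mod_cast hpow
    have h3 : (0 : ℝ) < 3 ^ k := by positivity
    have h4 : (0 : ℝ) ≤ (k : ℝ) + 1 := by positivity
    have e23 : ((2 : ℝ) / 3) ^ k = 2 ^ k / 3 ^ k := div_pow 2 3 k
    rw [e23]
    rw [show (3 : ℝ) * ((k : ℝ) + 1) * (2 ^ k / 3 ^ k) * N
        = (((k : ℝ) + 1) * 2 ^ k) * ((3 * N) / 3 ^ k) by ring]
    have h5 : (1 : ℝ) ≤ (3 * N) / 3 ^ k := (one_le_div h3).2 h2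
    calc (({n ∈ range N | ¬ 3 ∣ catalan n}).card : ℝ)
        ≤ ((k : ℝ) + 1) * 2 ^ k := h1
      _ ≤ (((k : ℝ) + 1) * 2 ^ k) * ((3 * N) / 3 ^ k) := le_mul_of_one_le_right (by positivity) h5
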